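/- Let r ≥ 1 and 0 ≤ l ≤ r. The number of set partitions of the 2r-element set {1,…,r,1',…,r'} whose propagating number is exactly l equals l! · (Σ_{k=l}^{r} S(r,k) · C(k,l))². Here the propagating number of a set partition of {1,…,r,1',…,r'} is the number of blocks containing both an element of {1,…,r} and an element of {1',…,r'}. -/

import Mathlib

/-- The Stirling number of the second kind: the number of set partitions of an
`r`-element set into exactly `k` blocks. -/
noncomputable def stirling (r k : ℕ) : ℕ :=
  Nat.card {P : Finpartition (Finset.univ : Finset (Fin r)) // P.parts.card = k}

/-- The propagating number of a set partition of `{1,…,r} ⊔ {1',…,r'}`: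
the number of blocks containing both an element of the top row (`inl`) and the
bottom row (`inr`). -/
def propagatingNumber (r : ℕ)
    (P : Finpartition (Finset.univ : Finset (Fin r ⊕ Fin r))) : ℕ :=
  (P.parts.filter (fun b =>
    (∃ x ∈ b, Sum.isLeft x = true) ∧ (∃ x ∈ b, Sum.isRight x = true))).card

open Finset

namespace PropNum
noncomputable section
open Classical

variable {α : Type*} [Fintype α] [DecidableEq α]

lemma parts_eq_image_part (P : Finpartition (univ : Finset α)) :
    P.parts = univ.image P.part := by
  ext b
  simp only [mem_image]
  constructor
  · intro hb
    obtain ⟨x, -, hx⟩ := P.part_surjOn hb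
    exact ⟨x, mem_univ x, hx⟩
  · rintro ⟨x, -, rfl⟩; exact P.part_mem.2 (mem_univ x)

lemma eq_of_part_eq {P Q : Finpartition (univ : Finset α)} (h : ∀ a, P.part a = Q.part a) :
    P = Q := by
  apply Finpartition.ext
  rw [parts_eq_image_part, parts_eq_image_part]
  exact image_congr fun a _ => h a

lemma ofSetoid_ker_part (P : Finpartition (univ : Finset α)) :
    Finpartition.ofSetoid (Setoid.ker P.part) = P := by
  apply eq_of_part_eq
  intro a
  ext b
  rw [Finpartition.mem_part_ofSetoid_iff_rel]
  show P.part a = P.part b ↔ _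
  rw [eq_comm, ← P.mem_part_iff_part_eq_part (mem_univ b) (mem_univ a)]

lemma ofSetoid_ker_congr {β γ : Type*} {L : α → β} {M : α → γ}
    (h : ∀ a b, L a = L b ↔ M a = M b) :
    Finpartition.ofSetoid (Setoid.ker L) = Finpartition.ofSetoid (Setoid.ker M) := by
  apply eq_of_part_eq
  intro a
  ext b
  rw [Finpartition.mem_part_ofSetoid_iff_rel, Finpartition.mem_part_ofSetoid_iff_rel]
  exact h a b

variable {r l : ℕ}

def pl (b : Finset (Fin r ⊕ Fin r)) : Finset (Fin r) :=
  b.preimage Sum.inl Sum.inl_injective.injOn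

def pr (b : Finset (Fin r ⊕ Fin r)) : Finset (Fin r) :=
  b.preimage Sum.inr Sum.inr_injective.injOn

@[simp] lemma mem_pl {b : Finset (Fin r ⊕ Fin r)} {x : Fin r} : x ∈ pl b ↔ Sum.inl x ∈ b :=
  Finset.mem_preimage

@[simp] lemma mem_pr {b : Finset (Fin r ⊕ Fin r)} {y : Fin r} : y ∈ pr b ↔ Sum.inr y ∈ b :=
  Finset.mem_preimage

def Mixed (b : Finset (Fin r ⊕ Fin r)) : Prop :=
  (∃ x ∈ b, Sum.isLeft x = true) ∧ (∃ x ∈ b, Sum.isRight x = true)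

lemma mixed_iff {b : Finset (Fin r ⊕ Fin r)} :
    Mixed b ↔ (pl b).Nonempty ∧ (pr b).Nonempty := by
  unfold Mixed
  constructor
  · rintro ⟨⟨a, ha, hal⟩, ⟨c, hc, hcr⟩⟩
    obtain ⟨x, rfl⟩ := Sum.isLeft_iff.1 hal
    obtain ⟨y, rfl⟩ := Sum.isRight_iff.1 hcr
    exact ⟨⟨x, mem_pl.2 ha⟩, ⟨y, mem_pr.2 hc⟩⟩
  · rintro ⟨⟨x, hx⟩, ⟨y, hy⟩⟩
    exact ⟨⟨Sum.inl x, mem_pl.1 hx, rfl⟩, ⟨Sum.inr y, mem_pr.1 hy, rfl⟩⟩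

lemma eq_of_pl_eq {P : Finpartition (univ : Finset (Fin r ⊕ Fin r))} {b c : Finset (Fin r ⊕ Fin r)}
    (hb : b ∈ P.parts) (hc : c ∈ P.parts) (hne : (pl b).Nonempty) (h : pl b = pl c) : b = c := by
  obtain ⟨x, hx⟩ := hne
  exact P.eq_of_mem_parts hb hc (mem_pl.1 hx) (mem_pl.1 (h ▸ hx))

lemma eq_of_pr_eq {P : Finpartition (univ : Finset (Fin r ⊕ Fin r))} {b c : Finset (Fin r ⊕ Fin r)}
    (hb : b ∈ P.parts) (hc : c ∈ P.parts) (hne : (pr b).Nonempty) (h : pr b = pr c) : b = c := by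
  obtain ⟨y, hy⟩ := hne
  exact P.eq_of_mem_parts hb hc (mem_pr.1 hy) (mem_pr.1 (h ▸ hy))

section Build

variable (P₁ : Finpartition (univ : Finset (Fin r))) (S : Finset (Finset (Fin r)))
  (hcard : #S = l) (P₂ : Finpartition (univ : Finset (Fin r)))
  (f : Fin l ↪ {b // b ∈ P₂.parts})

def gEquiv : Fin l ≃ {u // u ∈ S} := (finCongr hcard.symm).trans S.equivFin.symm

def label : Fin r ⊕ Fin r → Finset (Fin r) ⊕ Finset (Fin r) ⊕ Fin l
  | Sum.inl x =>
    if hx : P₁.part x ∈ S then Sum.inr (Sum.inr ((gEquiv S hcard).symm ⟨_, hx⟩))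
    else Sum.inl (P₁.part x)
  | Sum.inr y =>
    if hy : ∃ i, (↑(f i) : Finset (Fin r)) = P₂.part y then Sum.inr (Sum.inr hy.choose)
    else Sum.inr (Sum.inl (P₂.part y))

def buildP : Finpartition (univ : Finset (Fin r ⊕ Fin r)) :=
  Finpartition.ofSetoid (Setoid.ker (label P₁ S hcard P₂ f))

variable {P₁ S hcard P₂ f}

lemma label_inl_mem {x : Fin r} {i : Fin l} (h : P₁.part x = ↑(gEquiv S hcard i)) :
    label P₁ S hcard P₂ f (Sum.inl x) = Sum.inr (Sum.inr i) := by
  have hx : P₁.part x ∈ S := h ▸ (gEquiv S hcard i).2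
  simp only [label, dif_pos hx]
  congr 2
  rw [Equiv.symm_apply_eq]
  exact Subtype.ext h

lemma label_inl_not {x : Fin r} (h : P₁.part x ∉ S) :
    label P₁ S hcard P₂ f (Sum.inl x) = Sum.inl (P₁.part x) := by
  simp only [label, dif_neg h]

lemma label_inr_mem {y : Fin r} {i : Fin l} (h : (↑(f i) : Finset (Fin r)) = P₂.part y) :
    label P₁ S hcard P₂ f (Sum.inr y) = Sum.inr (Sum.inr i) := by
  have hy : ∃ j, (↑(f j) : Finset (Fin r)) = P₂.part y := ⟨i, h⟩
  simp only [label, dif_pos hy]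
  congr 2
  exact f.injective (Subtype.ext (hy.choose_spec.trans h.symm))

lemma label_inr_not {y : Fin r} (h : ∀ i, (↑(f i) : Finset (Fin r)) ≠ P₂.part y) :
    label P₁ S hcard P₂ f (Sum.inr y) = Sum.inr (Sum.inl (P₂.part y)) := by
  simp only [label, dif_neg (not_exists.2 h)]

lemma left_cases (x : Fin r) :
    (∃ i, P₁.part x = ↑(gEquiv S hcard i)) ∨ P₁.part x ∉ S := by
  by_cases h : P₁.part x ∈ S
  · exact Or.inl ⟨(gEquiv S hcard).symm ⟨_, h⟩, by simp⟩
  · exact Or.inr h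

def blockMix (i : Fin l) : Finset (Fin r ⊕ Fin r) :=
  (↑(gEquiv S hcard i) : Finset (Fin r)).image Sum.inl ∪ (↑(f i) : Finset (Fin r)).image Sum.inr

@[simp] lemma inl_mem_blockMix {x : Fin r} {i : Fin l} :
    Sum.inl x ∈ blockMix (hcard := hcard) (f := f) i ↔ x ∈ (↑(gEquiv S hcard i) : Finset (Fin r)) := by
  simp [blockMix]

@[simp] lemma inr_mem_blockMix {y : Fin r} {i : Fin l} :
    Sum.inr y ∈ blockMix (hcard := hcard) (f := f) i ↔ y ∈ (↑(f i) : Finset (Fin r)) := by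
  simp [blockMix]

lemma pl_blockMix (i : Fin l) :
    pl (blockMix (hcard := hcard) (f := f) i) = ↑(gEquiv S hcard i) := by
  ext x; simp

lemma pr_blockMix (i : Fin l) :
    pr (blockMix (hcard := hcard) (f := f) i) = ↑(f i) := by
  ext y; simp

lemma mem_part_build {a c : Fin r ⊕ Fin r} :
    c ∈ (buildP P₁ S hcard P₂ f).part a ↔ label P₁ S hcard P₂ f a = label P₁ S hcard P₂ f c := by
  simp only [buildP]
  exact Finpartition.mem_part_ofSetoid_iff_rel

lemma part_build_eq_iff {a c : Fin r ⊕ Fin r} :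
    (buildP P₁ S hcard P₂ f).part a = (buildP P₁ S hcard P₂ f).part c
      ↔ label P₁ S hcard P₂ f a = label P₁ S hcard P₂ f c := by
  simp only [buildP]
  rw [← Finpartition.mem_part_iff_part_eq_part _ (mem_univ a) (mem_univ c),
    Finpartition.mem_part_ofSetoid_iff_rel]
  exact ⟨fun h => (h : _ = _).symm, fun h => h.symm⟩

lemma part_build_inl_mem (hsub : S ⊆ P₁.parts) {x : Fin r} {i : Fin l}
    (h : P₁.part x = ↑(gEquiv S hcard i)) :
    (buildP P₁ S hcard P₂ f).part (Sum.inl x) = blockMix (hcard := hcard) (f := f) i := by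
  ext c
  rw [mem_part_build, label_inl_mem h]
  cases c with
  | inl x' =>
    rw [inl_mem_blockMix]
    constructor
    · intro he
      rcases left_cases (hcard := hcard) x' with ⟨j, hj⟩ | hn
      · rw [label_inl_mem (P₂ := P₂) (f := f) hj] at he
        obtain rfl : i = j := by simpa using he
        exact hj ▸ P₁.mem_part (mem_univ x')
      · rw [label_inl_not (P₂ := P₂) (f := f) hn] at he
        simp at he
    · intro hx'
      have hq : P₁.part x' = ↑(gEquiv S hcard i) :=
        P₁.part_eq_of_mem (hsub (gEquiv S hcard i).2) hx'
      rw [label_inl_mem hq]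
  | inr y' =>
    rw [inr_mem_blockMix]
    constructor
    · intro he
      rcases Classical.em (∃ j, (↑(f j) : Finset (Fin r)) = P₂.part y') with ⟨j, hj⟩ | hn
      · rw [label_inr_mem (P₁ := P₁) (S := S) hj] at he
        obtain rfl : i = j := by simpa using he
        rw [hj]
        exact P₂.mem_part (mem_univ y')
      · rw [label_inr_not (P₁ := P₁) (S := S) (not_exists.1 hn)] at he
        simp at he
    · intro hy'
      have hq : (↑(f i) : Finset (Fin r)) = P₂.part y' :=
        (P₂.part_eq_of_mem (f i).2 hy').symm
      rw [label_inr_mem hq]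

lemma part_build_inl_not {x : Fin r} (h : P₁.part x ∉ S) :
    (buildP P₁ S hcard P₂ f).part (Sum.inl x) = (P₁.part x).image Sum.inl := by
  ext c
  rw [mem_part_build, label_inl_not h]
  cases c with
  | inl x' =>
    simp only [mem_image, Sum.inl.injEq, exists_eq_right]
    constructor
    · intro he
      rcases left_cases (hcard := hcard) x' with ⟨j, hj⟩ | hn
      · rw [label_inl_mem (P₂ := P₂) (f := f) hj] at he
        simp at he
      · rw [label_inl_not (P₂ := P₂) (f := f) hn] at he
        have hpp : P₁.part x = P₁.part x' := by simpa using he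
        rw [hpp]
        exact P₁.mem_part (mem_univ x')
    · intro hm
      have hpp : P₁.part x' = P₁.part x := P₁.part_eq_of_mem (P₁.part_mem.2 (mem_univ x)) hm
      rw [label_inl_not (P₂ := P₂) (f := f) (fun hc => h (hpp ▸ hc)), hpp]
  | inr y' =>
    simp only [mem_image]
    constructor
    · intro he
      rcases Classical.em (∃ j, (↑(f j) : Finset (Fin r)) = P₂.part y') with ⟨j, hj⟩ | hn
      · rw [label_inr_mem (P₁ := P₁) (S := S) hj] at he
        simp at he
      · rw [label_inr_not (P₁ := P₁) (S := S) (not_exists.1 hn)] at he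
        simp at he
    · rintro ⟨z, -, hz⟩
      simp at hz

lemma part_build_inr_mem (hsub : S ⊆ P₁.parts) {y : Fin r} {i : Fin l}
    (h : (↑(f i) : Finset (Fin r)) = P₂.part y) :
    (buildP P₁ S hcard P₂ f).part (Sum.inr y) = blockMix (hcard := hcard) (f := f) i := by
  ext c
  rw [mem_part_build, label_inr_mem h]
  cases c with
  | inl x' =>
    rw [inl_mem_blockMix]
    constructor
    · intro he
      rcases left_cases (hcard := hcard) x' with ⟨j, hj⟩ | hn
      · rw [label_inl_mem (P₂ := P₂) (f := f) hj] at he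
        obtain rfl : i = j := by simpa using he
        exact hj ▸ P₁.mem_part (mem_univ x')
      · rw [label_inl_not (P₂ := P₂) (f := f) hn] at he
        simp at he
    · intro hx'
      have hq : P₁.part x' = ↑(gEquiv S hcard i) :=
        P₁.part_eq_of_mem (hsub (gEquiv S hcard i).2) hx'
      rw [label_inl_mem hq]
  | inr y' =>
    rw [inr_mem_blockMix]
    constructor
    · intro he
      rcases Classical.em (∃ j, (↑(f j) : Finset (Fin r)) = P₂.part y') with ⟨j, hj⟩ | hn
      · rw [label_inr_mem (P₁ := P₁) (S := S) hj] at he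
        obtain rfl : i = j := by simpa using he
        rw [hj]
        exact P₂.mem_part (mem_univ y')
      · rw [label_inr_not (P₁ := P₁) (S := S) (not_exists.1 hn)] at he
        simp at he
    · intro hy'
      have hq : (↑(f i) : Finset (Fin r)) = P₂.part y' :=
        (P₂.part_eq_of_mem (f i).2 hy').symm
      rw [label_inr_mem hq]

lemma part_build_inr_not {y : Fin r} (h : ∀ i, (↑(f i) : Finset (Fin r)) ≠ P₂.part y) :
    (buildP P₁ S hcard P₂ f).part (Sum.inr y) = (P₂.part y).image Sum.inr := by
  ext c
  rw [mem_part_build, label_inr_not h]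
  cases c with
  | inl x' =>
    simp only [mem_image]
    constructor
    · intro he
      rcases left_cases (hcard := hcard) x' with ⟨j, hj⟩ | hn
      · rw [label_inl_mem (P₂ := P₂) (f := f) hj] at he
        simp at he
      · rw [label_inl_not (P₂ := P₂) (f := f) hn] at he
        simp at he
    · rintro ⟨z, -, hz⟩
      simp at hz
  | inr y' =>
    simp only [mem_image, Sum.inr.injEq, exists_eq_right]
    constructor
    · intro he
      rcases Classical.em (∃ j, (↑(f j) : Finset (Fin r)) = P₂.part y') with ⟨j, hj⟩ | hn
      · rw [label_inr_mem (P₁ := P₁) (S := S) hj] at he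
        simp at he
      · rw [label_inr_not (P₁ := P₁) (S := S) (not_exists.1 hn)] at he
        have hpp : P₂.part y = P₂.part y' := by simpa using he
        rw [hpp]
        exact P₂.mem_part (mem_univ y')
    · intro hm
      have hpp : P₂.part y' = P₂.part y := P₂.part_eq_of_mem (P₂.part_mem.2 (mem_univ y)) hm
      rw [label_inr_not (P₁ := P₁) (S := S) (fun i hc => h i (hpp ▸ hc)), hpp]

lemma blockMix_mem (hsub : S ⊆ P₁.parts) (i : Fin l) :
    blockMix (hcard := hcard) (f := f) i ∈ (buildP P₁ S hcard P₂ f).parts := by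
  obtain ⟨x, hx⟩ := P₁.nonempty_of_mem_parts (hsub (gEquiv S hcard i).2)
  have h : P₁.part x = ↑(gEquiv S hcard i) :=
    P₁.part_eq_of_mem (hsub (gEquiv S hcard i).2) hx
  rw [← part_build_inl_mem (P₂ := P₂) (f := f) hsub h]
  exact (Finpartition.part_mem _).2 (mem_univ _)

lemma mixed_filter_build (hsub : S ⊆ P₁.parts) :
    (buildP P₁ S hcard P₂ f).parts.filter Mixed
      = (univ : Finset (Fin l)).image (blockMix (hcard := hcard) (f := f)) := by
  ext b
  simp only [mem_filter, mem_image]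
  constructor
  · rintro ⟨hb, hm⟩
    rw [parts_eq_image_part, mem_image] at hb
    obtain ⟨a, -, rfl⟩ := hb
    cases a with
    | inl x =>
      rcases left_cases (hcard := hcard) x with ⟨i, hi⟩ | hn
      · exact ⟨i, mem_univ i, (part_build_inl_mem hsub hi).symm⟩
      · exfalso
        rw [part_build_inl_not (hcard := hcard) (f := f) hn] at hm
        obtain ⟨-, c, hc, hcr⟩ := hm
        obtain ⟨z, -, rfl⟩ := mem_image.1 hc
        simp at hcr
    | inr y =>
      rcases Classical.em (∃ i, (↑(f i) : Finset (Fin r)) = P₂.part y) with ⟨i, hi⟩ | hn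
      · exact ⟨i, mem_univ i, (part_build_inr_mem hsub hi).symm⟩
      · exfalso
        rw [part_build_inr_not (hcard := hcard) (S := S) (not_exists.1 hn)] at hm
        obtain ⟨⟨c, hc, hcl⟩, -⟩ := hm
        obtain ⟨z, -, rfl⟩ := mem_image.1 hc
        simp at hcl
  · rintro ⟨i, -, rfl⟩
    refine ⟨blockMix_mem hsub i, ?_, ?_⟩
    · obtain ⟨x, hx⟩ := P₁.nonempty_of_mem_parts (hsub (gEquiv S hcard i).2)
      exact ⟨Sum.inl x, inl_mem_blockMix.2 hx, rfl⟩
    · obtain ⟨y, hy⟩ := P₂.nonempty_of_mem_parts (f i).2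
      exact ⟨Sum.inr y, inr_mem_blockMix.2 hy, rfl⟩

lemma blockMix_injective :
    Function.Injective (blockMix (hcard := hcard) (f := f)) := by
  intro i j h
  have h2 : (↑(gEquiv S hcard i) : Finset (Fin r)) = ↑(gEquiv S hcard j) := by
    rw [← pl_blockMix (hcard := hcard) (f := f) i, ← pl_blockMix (hcard := hcard) (f := f) j, h]
  exact (gEquiv S hcard).injective (Subtype.ext h2)

lemma prop_build (hsub : S ⊆ P₁.parts) :
    propagatingNumber r (buildP P₁ S hcard P₂ f) = l := by
  have h1 := mixed_filter_build (hcard := hcard) (f := f) hsub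
  unfold Mixed at h1
  unfold propagatingNumber
  rw [Finset.filter_congr_decidable] at h1 ⊢
  rw [h1, card_image_of_injective _ (blockMix_injective (hcard := hcard) (f := f)),
    card_univ, Fintype.card_fin]


lemma label_inl_eq_iff {x x' : Fin r} :
    label P₁ S hcard P₂ f (Sum.inl x) = label P₁ S hcard P₂ f (Sum.inl x')
      ↔ P₁.part x = P₁.part x' := by
  rcases left_cases (hcard := hcard) x with ⟨i, hi⟩ | hn
  · rcases left_cases (hcard := hcard) x' with ⟨j, hj⟩ | hn'
    · rw [label_inl_mem (P₂ := P₂) (f := f) hi, label_inl_mem (P₂ := P₂) (f := f) hj, hi, hj]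
      constructor
      · intro h
        obtain rfl : i = j := by simpa using h
        rfl
      · intro h
        obtain rfl : i = j := (gEquiv S hcard).injective (Subtype.ext (by simpa using h))
        rfl
    · rw [label_inl_mem (P₂ := P₂) (f := f) hi, label_inl_not (P₂ := P₂) (f := f) hn']
      constructor
      · intro h; simp at h
      · intro h
        refine absurd ?_ hn'
        rw [← h, hi]; exact (gEquiv S hcard i).2
  · rcases left_cases (hcard := hcard) x' with ⟨j, hj⟩ | hn'
    · rw [label_inl_not (P₂ := P₂) (f := f) hn, label_inl_mem (P₂ := P₂) (f := f) hj]
      constructor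
      · intro h; simp at h
      · intro h
        refine absurd ?_ hn
        rw [h, hj]; exact (gEquiv S hcard j).2
    · rw [label_inl_not (P₂ := P₂) (f := f) hn, label_inl_not (P₂ := P₂) (f := f) hn']
      simp

lemma label_inr_eq_iff {y y' : Fin r} :
    label P₁ S hcard P₂ f (Sum.inr y) = label P₁ S hcard P₂ f (Sum.inr y')
      ↔ P₂.part y = P₂.part y' := by
  rcases Classical.em (∃ i, (↑(f i) : Finset (Fin r)) = P₂.part y) with ⟨i, hi⟩ | hn
  · rcases Classical.em (∃ j, (↑(f j) : Finset (Fin r)) = P₂.part y') with ⟨j, hj⟩ | hn'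
    · rw [label_inr_mem (P₁ := P₁) (S := S) hi, label_inr_mem (P₁ := P₁) (S := S) hj,
        ← hi, ← hj]
      constructor
      · intro h
        obtain rfl : i = j := by simpa using h
        rfl
      · intro h
        obtain rfl : i = j := f.injective (Subtype.ext (by simpa using h))
        rfl
    · rw [label_inr_mem (P₁ := P₁) (S := S) hi, label_inr_not (P₁ := P₁) (S := S) (not_exists.1 hn')]
      constructor
      · intro h; simp at h
      · intro h; exact absurd ⟨i, hi.trans h⟩ hn'
  · rcases Classical.em (∃ j, (↑(f j) : Finset (Fin r)) = P₂.part y') with ⟨j, hj⟩ | hn'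
    · rw [label_inr_not (P₁ := P₁) (S := S) (not_exists.1 hn), label_inr_mem (P₁ := P₁) (S := S) hj]
      constructor
      · intro h; simp at h
      · intro h; exact absurd ⟨j, hj.trans h.symm⟩ hn
    · rw [label_inr_not (P₁ := P₁) (S := S) (not_exists.1 hn),
        label_inr_not (P₁ := P₁) (S := S) (not_exists.1 hn')]
      simp

lemma image_coe_gEquiv :
    (univ : Finset (Fin l)).image (fun i => (↑(gEquiv S hcard i) : Finset (Fin r))) = S := by
  ext u
  simp only [mem_image, mem_univ, true_and]
  constructor
  · rintro ⟨i, rfl⟩; exact (gEquiv S hcard i).2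
  · intro hu; exact ⟨(gEquiv S hcard).symm ⟨u, hu⟩, by simp⟩

lemma pl_image_mixed_filter (hsub : S ⊆ P₁.parts) :
    ((buildP P₁ S hcard P₂ f).parts.filter Mixed).image pl = S := by
  rw [mixed_filter_build (hcard := hcard) (f := f) hsub, image_image]
  rw [show (pl ∘ blockMix (hcard := hcard) (f := f))
      = fun i => (↑(gEquiv S hcard i) : Finset (Fin r)) from
    funext fun i => pl_blockMix (hcard := hcard) (f := f) i]
  exact image_coe_gEquiv

end Build


abbrev MarkedT (r l : ℕ) :=
  Σ P : Finpartition (univ : Finset (Fin r)), {S // S ∈ P.parts.powersetCard l}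

abbrev OMarkedT (r l : ℕ) :=
  Σ P : Finpartition (univ : Finset (Fin r)), Fin l ↪ {b // b ∈ P.parts}

def buildFull (d : MarkedT r l × OMarkedT r l) :
    {P : Finpartition (univ : Finset (Fin r ⊕ Fin r)) // propagatingNumber r P = l} :=
  ⟨buildP d.1.1 d.1.2.1 (mem_powersetCard.1 d.1.2.2).2 d.2.1 d.2.2,
    prop_build (mem_powersetCard.1 d.1.2.2).1⟩

lemma buildFull_injective : Function.Injective (buildFull (r := r) (l := l)) := by
  rintro ⟨⟨P₁, S, hS⟩, ⟨P₂, f⟩⟩ ⟨⟨Q₁, T, hT⟩, ⟨Q₂, g⟩⟩ h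
  simp only [buildFull, Subtype.mk.injEq] at h
  have e1 : P₁ = Q₁ := by
    rw [← ofSetoid_ker_part P₁, ← ofSetoid_ker_part Q₁]
    apply ofSetoid_ker_congr
    intro x x'
    rw [← label_inl_eq_iff (hcard := (mem_powersetCard.1 hS).2) (P₂ := P₂) (f := f),
      ← label_inl_eq_iff (hcard := (mem_powersetCard.1 hT).2) (P₂ := Q₂) (f := g),
      ← part_build_eq_iff, ← part_build_eq_iff, h]
  have e2 : P₂ = Q₂ := by
    rw [← ofSetoid_ker_part P₂, ← ofSetoid_ker_part Q₂]
    apply ofSetoid_ker_congr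
    intro y y'
    rw [← label_inr_eq_iff (hcard := (mem_powersetCard.1 hS).2) (P₁ := P₁) (f := f),
      ← label_inr_eq_iff (hcard := (mem_powersetCard.1 hT).2) (P₁ := Q₁) (f := g),
      ← part_build_eq_iff, ← part_build_eq_iff, h]
  subst e1
  subst e2
  have e3 : S = T := by
    rw [← pl_image_mixed_filter (hcard := (mem_powersetCard.1 hS).2) (P₂ := P₂) (f := f)
        (mem_powersetCard.1 hS).1,
      ← pl_image_mixed_filter (hcard := (mem_powersetCard.1 hT).2) (P₂ := P₂) (f := g)
        (mem_powersetCard.1 hT).1, h]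
  subst e3
  have e4 : f = g := by
    apply DFunLike.ext
    intro i
    apply Subtype.ext
    rw [← pr_blockMix (hcard := (mem_powersetCard.1 hS).2) (f := f) i,
      ← pr_blockMix (hcard := (mem_powersetCard.1 hT).2) (f := g) i]
    congr 1
    refine eq_of_pl_eq (P := buildP P₁ S (mem_powersetCard.1 hS).2 P₂ f)
      (blockMix_mem (mem_powersetCard.1 hS).1 i) ?_ ?_ ?_
    · rw [h]; exact blockMix_mem (mem_powersetCard.1 hT).1 i
    · rw [pl_blockMix]
      exact P₁.nonempty_of_mem_parts ((mem_powersetCard.1 hS).1 (gEquiv S (mem_powersetCard.1 hS).2 i).2)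
    · rw [pl_blockMix, pl_blockMix]
  subst e4
  rfl


lemma buildFull_surjective : Function.Surjective (buildFull (r := r) (l := l)) := by
  rintro ⟨P, hP⟩
  -- mixed blocks
  have hl' : #(P.parts.filter Mixed) = l := by
    rw [← hP]
    unfold propagatingNumber Mixed
    rw [Finset.filter_congr_decidable, Finset.filter_congr_decidable]
  set P₁ : Finpartition (univ : Finset (Fin r)) :=
    Finpartition.ofSetoid (Setoid.ker (fun x => P.part (Sum.inl x))) with hP₁
  set P₂ : Finpartition (univ : Finset (Fin r)) :=
    Finpartition.ofSetoid (Setoid.ker (fun y => P.part (Sum.inr y))) with hP₂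
  have hpart1 : ∀ x : Fin r, P₁.part x = pl (P.part (Sum.inl x)) := by
    intro x
    ext x'
    rw [hP₁, Finpartition.mem_part_ofSetoid_iff_rel]
    show P.part (Sum.inl x) = P.part (Sum.inl x') ↔ _
    rw [mem_pl, P.mem_part_iff_part_eq_part (mem_univ (Sum.inl x')) (mem_univ (Sum.inl x)), eq_comm]
  have hpart2 : ∀ y : Fin r, P₂.part y = pr (P.part (Sum.inr y)) := by
    intro y
    ext y'
    rw [hP₂, Finpartition.mem_part_ofSetoid_iff_rel]
    show P.part (Sum.inr y) = P.part (Sum.inr y') ↔ _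
    rw [mem_pr, P.mem_part_iff_part_eq_part (mem_univ (Sum.inr y')) (mem_univ (Sum.inr y)), eq_comm]
  have hxmem : ∀ x : Fin r, x ∈ pl (P.part (Sum.inl x)) := fun x =>
    mem_pl.2 (P.mem_part (mem_univ _))
  have hymem : ∀ y : Fin r, y ∈ pr (P.part (Sum.inr y)) := fun y =>
    mem_pr.2 (P.mem_part (mem_univ _))
  set S : Finset (Finset (Fin r)) := (P.parts.filter Mixed).image pl with hSdef
  have hcard : #S = l := by
    rw [hSdef, card_image_of_injOn, hl']
    intro b hb c hc hbc
    simp only [coe_filter, Set.mem_setOf_eq] at hb hc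
    exact eq_of_pl_eq hb.1 hc.1 (mixed_iff.1 hb.2).1 hbc
  have hsub : S ⊆ P₁.parts := by
    intro u hu
    rw [hSdef, mem_image] at hu
    obtain ⟨b, hb, rfl⟩ := hu
    rw [mem_filter] at hb
    obtain ⟨x, hx⟩ := (mixed_iff.1 hb.2).1
    have hbx : P.part (Sum.inl x) = b := P.part_eq_of_mem hb.1 (mem_pl.1 hx)
    have : P₁.part x = pl b := by rw [hpart1, hbx]
    rw [← this]
    exact P₁.part_mem.2 (mem_univ x)
  have hex : ∀ i : Fin l, ∃ b, (b ∈ P.parts ∧ Mixed b) ∧ pl b = ↑(gEquiv S hcard i) := by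
    intro i
    have h2 : (↑(gEquiv S hcard i) : Finset (Fin r)) ∈ (P.parts.filter Mixed).image pl :=
      (gEquiv S hcard i).2
    rw [mem_image] at h2
    obtain ⟨b, hb, hpl⟩ := h2
    rw [mem_filter] at hb
    exact ⟨b, ⟨hb.1, hb.2⟩, hpl⟩
  choose bOf hbOf hbpl using hex
  have hbmem : ∀ i, bOf i ∈ P.parts := fun i => (hbOf i).1
  have hbmix : ∀ i, Mixed (bOf i) := fun i => (hbOf i).2
  have hbinj : ∀ i j, bOf i = bOf j → i = j := by
    intro i j hij
    have : (↑(gEquiv S hcard i) : Finset (Fin r)) = ↑(gEquiv S hcard j) := by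
      rw [← hbpl i, ← hbpl j, hij]
    exact (gEquiv S hcard).injective (Subtype.ext this)
  have hprmem : ∀ i : Fin l, pr (bOf i) ∈ P₂.parts := by
    intro i
    obtain ⟨y, hy⟩ := (mixed_iff.1 (hbmix i)).2
    have hby : P.part (Sum.inr y) = bOf i := P.part_eq_of_mem (hbmem i) (mem_pr.1 hy)
    have : P₂.part y = pr (bOf i) := by rw [hpart2, hby]
    rw [← this]
    exact P₂.part_mem.2 (mem_univ y)
  set f : Fin l ↪ {b // b ∈ P₂.parts} :=
    ⟨fun i => ⟨pr (bOf i), hprmem i⟩, by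
      intro i j hij
      apply hbinj
      exact eq_of_pr_eq (hbmem i) (hbmem j) (mixed_iff.1 (hbmix i)).2
        (congrArg Subtype.val hij)⟩ with hfdef
  -- key equivalences
  have K1 : ∀ (x : Fin r) (i : Fin l),
      P₁.part x = ↑(gEquiv S hcard i) ↔ P.part (Sum.inl x) = bOf i := by
    intro x i
    constructor
    · intro h
      refine eq_of_pl_eq (P.part_mem.2 (mem_univ _)) (hbmem i) ⟨x, hxmem x⟩ ?_
      rw [← hpart1, h, hbpl]
    · intro h
      rw [hpart1, h, hbpl]
  have K2 : ∀ x : Fin r, P₁.part x ∈ S ↔ Mixed (P.part (Sum.inl x)) := by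
    intro x
    constructor
    · intro h
      rw [hpart1, hSdef, mem_image] at h
      obtain ⟨b, hb, hplb⟩ := h
      rw [mem_filter] at hb
      have : P.part (Sum.inl x) = b :=
        eq_of_pl_eq (P.part_mem.2 (mem_univ _)) hb.1 ⟨x, hxmem x⟩ hplb.symm
      rw [this]
      exact hb.2
    · intro h
      rw [hpart1, hSdef, mem_image]
      exact ⟨P.part (Sum.inl x), mem_filter.2 ⟨P.part_mem.2 (mem_univ _), h⟩, rfl⟩
  have K3 : ∀ (y : Fin r) (i : Fin l),
      (↑(f i) : Finset (Fin r)) = P₂.part y ↔ P.part (Sum.inr y) = bOf i := by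
    intro y i
    show pr (bOf i) = P₂.part y ↔ _
    constructor
    · intro h
      refine eq_of_pr_eq (P.part_mem.2 (mem_univ _)) (hbmem i) ⟨y, hymem y⟩ ?_
      rw [← hpart2, ← h]
    · intro h
      rw [hpart2, h]
  have K4 : ∀ y : Fin r,
      (∃ i, (↑(f i) : Finset (Fin r)) = P₂.part y) ↔ Mixed (P.part (Sum.inr y)) := by
    intro y
    constructor
    · rintro ⟨i, hi⟩
      rw [(K3 y i).1 hi]
      exact hbmix i
    · intro h
      have hplS : pl (P.part (Sum.inr y)) ∈ S := by
        rw [hSdef, mem_image]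
        exact ⟨P.part (Sum.inr y), mem_filter.2 ⟨P.part_mem.2 (mem_univ _), h⟩, rfl⟩
      set i := (gEquiv S hcard).symm ⟨_, hplS⟩ with hidef
      have hgi : (↑(gEquiv S hcard i) : Finset (Fin r)) = pl (P.part (Sum.inr y)) := by
        rw [hidef]; simp
      have hbi : P.part (Sum.inr y) = bOf i := by
        refine eq_of_pl_eq (P.part_mem.2 (mem_univ _)) (hbmem i) (mixed_iff.1 h).1 ?_
        rw [hbpl, hgi]
      exact ⟨i, (K3 y i).2 hbi⟩
  -- main kernel identity
  have main : ∀ (x y : Fin r),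
      label P₁ S hcard P₂ f (Sum.inl x) = label P₁ S hcard P₂ f (Sum.inr y)
        ↔ P.part (Sum.inl x) = P.part (Sum.inr y) := by
    intro x y
    constructor
    · intro he
      rcases left_cases (hcard := hcard) x with ⟨i, hi⟩ | hn
      · rcases Classical.em (∃ j, (↑(f j) : Finset (Fin r)) = P₂.part y) with ⟨j, hj⟩ | hn'
        · rw [label_inl_mem (P₂ := P₂) (f := f) hi,
            label_inr_mem (P₁ := P₁) (S := S) hj] at he
          obtain rfl : i = j := by simpa using he
          rw [(K1 x i).1 hi, (K3 y i).1 hj]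
        · rw [label_inl_mem (P₂ := P₂) (f := f) hi,
            label_inr_not (P₁ := P₁) (S := S) (not_exists.1 hn')] at he
          simp at he
      · rcases Classical.em (∃ j, (↑(f j) : Finset (Fin r)) = P₂.part y) with ⟨j, hj⟩ | hn'
        · rw [label_inl_not (P₂ := P₂) (f := f) hn,
            label_inr_mem (P₁ := P₁) (S := S) hj] at he
          simp at he
        · rw [label_inl_not (P₂ := P₂) (f := f) hn,
            label_inr_not (P₁ := P₁) (S := S) (not_exists.1 hn')] at he
          simp at he
    · intro hp
      have hmix : Mixed (P.part (Sum.inl x)) := by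
        refine mixed_iff.2 ⟨⟨x, hxmem x⟩, ?_⟩
        rw [hp]
        exact ⟨y, hymem y⟩
      rcases left_cases (hcard := hcard) x with ⟨i, hi⟩ | hn
      · have hbi : P.part (Sum.inl x) = bOf i := (K1 x i).1 hi
        have hfy : (↑(f i) : Finset (Fin r)) = P₂.part y := by
          refine (K3 y i).2 ?_
          rw [← hp, hbi]
        rw [label_inl_mem (P₂ := P₂) (f := f) hi, label_inr_mem (P₁ := P₁) (S := S) hfy]
      · exact absurd ((K2 x).2 hmix) hn
  have hker : ∀ a c : Fin r ⊕ Fin r,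
      label P₁ S hcard P₂ f a = label P₁ S hcard P₂ f c ↔ P.part a = P.part c := by
    intro a c
    cases a with
    | inl x =>
      cases c with
      | inl x' =>
        rw [label_inl_eq_iff]
        constructor
        · intro h
          refine eq_of_pl_eq (P.part_mem.2 (mem_univ _)) (P.part_mem.2 (mem_univ _)) ⟨x, hxmem x⟩ ?_
          rw [← hpart1, ← hpart1, h]
        · intro h
          rw [hpart1, hpart1, h]
      | inr y => exact main x y
    | inr y =>
      cases c with
      | inl x => exact ⟨fun h => ((main x y).1 h.symm).symm, fun h => ((main x y).2 h.symm).symm⟩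
      | inr y' =>
        rw [label_inr_eq_iff]
        constructor
        · intro h
          refine eq_of_pr_eq (P.part_mem.2 (mem_univ _)) (P.part_mem.2 (mem_univ _)) ⟨y, hymem y⟩ ?_
          rw [← hpart2, ← hpart2, h]
        · intro h
          rw [hpart2, hpart2, h]
  have hbuild : buildP P₁ S hcard P₂ f = P := by
    rw [buildP]
    exact (ofSetoid_ker_congr hker).trans (ofSetoid_ker_part P)
  refine ⟨⟨⟨P₁, S, mem_powersetCard.2 ⟨hsub, hcard⟩⟩, ⟨P₂, f⟩⟩, ?_⟩
  apply Subtype.ext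
  exact hbuild

lemma stirling_eq (r k : ℕ) :
    stirling r k = #(univ.filter (fun P : Finpartition (univ : Finset (Fin r)) => #P.parts = k)) := by
  rw [stirling, Nat.card_eq_fintype_card, Fintype.card_subtype]

lemma sum_over_partitions (g : ℕ → ℕ) (hg : ∀ k, k < l → g k = 0) :
    ∑ P : Finpartition (univ : Finset (Fin r)), g #P.parts
      = ∑ k ∈ Finset.Icc l r, stirling r k * g k := by
  rw [← Finset.sum_fiberwise_of_maps_to (t := Finset.range (r + 1))
    (g := fun P : Finpartition (univ : Finset (Fin r)) => #P.parts)
    (fun P _ => by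
      simpa [Nat.lt_succ_iff] using P.card_parts_le_card.trans_eq (by simp))
    (fun P => g #P.parts)]
  rw [← Finset.sum_subset (s₁ := Finset.Icc l r) (by
      intro k hk
      simp only [Finset.mem_Icc] at hk
      simp [Nat.lt_succ_iff, hk.2])
    (by
      intro k hk hk'
      simp only [Finset.mem_range, Nat.lt_succ_iff] at hk
      simp only [Finset.mem_Icc, not_and, not_le] at hk'
      refine Finset.sum_eq_zero fun P hP => ?_
      simp only [Finset.mem_filter] at hP
      rw [hP.2]
      exact hg k (lt_of_not_ge fun h => absurd (hk' h) (not_lt.2 hk)))]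
  refine Finset.sum_congr rfl fun k _ => ?_
  rw [stirling_eq]
  rw [Finset.sum_congr rfl (fun P hP => by
    simp only [Finset.mem_filter] at hP
    rw [hP.2])]
  simp [mul_comm]

lemma card_MarkedT : Nat.card (MarkedT r l) = ∑ k ∈ Finset.Icc l r, stirling r k * Nat.choose k l := by
  rw [Nat.card_eq_fintype_card, Fintype.card_sigma]
  rw [← sum_over_partitions (fun k => Nat.choose k l) (fun k hk => Nat.choose_eq_zero_of_lt hk)]
  refine Finset.sum_congr rfl fun P _ => ?_
  rw [Fintype.card_coe, card_powersetCard]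

lemma card_OMarkedT :
    Nat.card (OMarkedT r l) = ∑ k ∈ Finset.Icc l r, stirling r k * (Nat.choose k l * Nat.factorial l) := by
  rw [Nat.card_eq_fintype_card, Fintype.card_sigma]
  rw [← sum_over_partitions (fun k => Nat.choose k l * Nat.factorial l)
    (fun k hk => by simp [Nat.choose_eq_zero_of_lt hk])]
  refine Finset.sum_congr rfl fun P _ => ?_
  rw [Fintype.card_embedding_eq, Fintype.card_coe, Fintype.card_fin,
    Nat.descFactorial_eq_factorial_mul_choose, mul_comm]

end
end PropNum

/-- For `1 ≤ r` and `l ≤ r`, the number of set partitions of the `2r`-element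
set with propagating number exactly `l` is `l! · (Σ_{k=l}^{r} S(r,k)·C(k,l))²`. -/
theorem card_partitions_with_propagating_number (r l : ℕ) (hr : 1 ≤ r) (hl : l ≤ r) :
    Nat.card {P : Finpartition (Finset.univ : Finset (Fin r ⊕ Fin r)) //
        propagatingNumber r P = l} =
      Nat.factorial l *
        (∑ k ∈ Finset.Icc l r, stirling r k * Nat.choose k l) ^ 2 := by
  have h1 : Nat.card (PropNum.MarkedT r l × PropNum.OMarkedT r l)
      = Nat.card {P : Finpartition (Finset.univ : Finset (Fin r ⊕ Fin r)) //
        propagatingNumber r P = l} :=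
    Nat.card_eq_of_bijective _ ⟨PropNum.buildFull_injective, PropNum.buildFull_surjective⟩
  rw [← h1, Nat.card_prod, PropNum.card_MarkedT, PropNum.card_OMarkedT]
  rw [show ∑ k ∈ Finset.Icc l r, stirling r k * (Nat.choose k l * Nat.factorial l)
      = (∑ k ∈ Finset.Icc l r, stirling r k * Nat.choose k l) * Nat.factorial l by
    rw [Finset.sum_mul]
    exact Finset.sum_congr rfl fun k _ => by ring]
  ring
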